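/- arXiv:2008.03450 — 2 statements merged into one kernel-verified Lean document; each statement's English description precedes it below -/
import Mathlib

section
/- Let σ_θ(S) denote the expected number of activated nodes under the Independent Cascade model on a directed graph G with n nodes and m edges, with edge parameters θ ∈ [0,1]^m, starting from seed set S. If θ_1, θ_2 satisfy ‖θ_1 − θ_2‖_∞ ≤ ε_0, then |σ_{θ_1}(S) − σ_{θ_2}(S)| ≤ m·n·ε_0 for every S ⊆ V. -/
open Finset

noncomputable section
open scoped Classical

variable {V E : Type*}

/-- Weight of a live-edge configuration ω under edge probabilities θ. -/
def liveWeight [Fintype E] (θ : E → ℝ) (ω : E → Bool) : ℝ :=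
  ∏ e, if ω e then θ e else 1 - θ e

/-- `v` is reachable from the seed set `S` via edges live in ω. -/
def reaches (src dst : E → V) (ω : E → Bool) (S : Finset V) (v : V) : Prop :=
  ∃ s ∈ S, Relation.ReflTransGen (fun a b => ∃ e, ω e = true ∧ src e = a ∧ dst e = b) s v

/-- Influence function: expected number of nodes reachable from S. -/
def icSigma [Fintype V] [Fintype E] (src dst : E → V) (θ : E → ℝ) (S : Finset V) : ℝ :=
  ∑ ω : E → Bool, liveWeight θ ω *
    ((Finset.univ.filter (fun v => reaches src dst ω S v)).card : ℝ)

/-- Probability that node v is reachable from seed set S. -/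
def reachProb [Fintype V] [Fintype E] (src dst : E → V) (θ : E → ℝ) (S : Finset V) (v : V) : ℝ :=
  ∑ ω : E → Bool, liveWeight θ ω * (if reaches src dst ω S v then 1 else 0)

lemma sumProdG [Fintype E] (g : E → Bool → ℝ) :
    ∑ ω : E → Bool, ∏ e, g e (ω e) = ∏ e, (g e true + g e false) := by
  have := Fintype.prod_sum (fun (e : E) (b : Bool) => g e b)
  simp only [Fintype.sum_bool] at this
  exact this.symm

lemma sum_liveWeight [Fintype E] (θ : E → ℝ) :
    ∑ ω : E → Bool, liveWeight θ ω = 1 := by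
  have h := sumProdG (fun (e : E) (b : Bool) => if b then θ e else 1 - θ e)
  simp only [liveWeight]
  rw [h]
  simp

/-- Single-edge perturbation bound. -/
lemma ic_single_edge [Fintype V] [Fintype E] (src dst : E → V) (θ θ' : E → ℝ)
    (h : ∀ e, θ e ∈ Set.Icc (0:ℝ) 1) (h' : ∀ e, θ' e ∈ Set.Icc (0:ℝ) 1)
    (e₀ : E) (hagree : ∀ e, e ≠ e₀ → θ e = θ' e) (S : Finset V) :
    |icSigma src dst θ S - icSigma src dst θ' S| ≤
      |θ e₀ - θ' e₀| * (Fintype.card V : ℝ) := by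
  set n : ℝ := (Fintype.card V : ℝ) with hn
  have hn0 : (0:ℝ) ≤ n := by positivity
  set F : (E → Bool) → ℝ :=
    fun ω => ((Finset.univ.filter (fun v => reaches src dst ω S v)).card : ℝ) with hF
  have hFbd : ∀ ω, |F ω - n / 2| ≤ n / 2 := by
    intro ω
    have h0 : (0:ℝ) ≤ F ω := by positivity
    have h1 : F ω ≤ n := by
      simp only [hF, hn]
      exact_mod_cast Finset.card_filter_le _ _
    rw [abs_le]; constructor <;> linarith
  -- pointwise bound on weight difference
  have hpt : ∀ ω : E → Bool, |liveWeight θ ω - liveWeight θ' ω|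
      = ∏ e, (fun e b => if e = e₀ then |θ e₀ - θ' e₀| else (if b then θ e else 1 - θ e)) e (ω e) := by
    intro ω
    have hsplit : ∀ (τ : E → ℝ), liveWeight τ ω =
        (if ω e₀ then τ e₀ else 1 - τ e₀) * ∏ e ∈ Finset.univ.erase e₀,
          (if ω e then τ e else 1 - τ e) := by
      intro τ
      rw [liveWeight, ← Finset.mul_prod_erase Finset.univ _ (Finset.mem_univ e₀)]
    have hR : (∏ e ∈ Finset.univ.erase e₀, (if ω e then θ e else 1 - θ e))
        = ∏ e ∈ Finset.univ.erase e₀, (if ω e then θ' e else 1 - θ' e) := by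
      apply Finset.prod_congr rfl
      intro e he
      rw [hagree e (Finset.ne_of_mem_erase he)]
    have hRn : (0:ℝ) ≤ ∏ e ∈ Finset.univ.erase e₀, (if ω e then θ e else 1 - θ e) := by
      apply Finset.prod_nonneg
      intro e _
      rcases h e with ⟨h0, h1⟩
      split <;> linarith
    have hdiff : liveWeight θ ω - liveWeight θ' ω =
        ((if ω e₀ then θ e₀ else 1 - θ e₀) - (if ω e₀ then θ' e₀ else 1 - θ' e₀)) *
          ∏ e ∈ Finset.univ.erase e₀, (if ω e then θ e else 1 - θ e) := by
      rw [hsplit θ, hsplit θ', hR]; ring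
    rw [hdiff, abs_mul, abs_of_nonneg hRn]
    have habs : |(if ω e₀ then θ e₀ else 1 - θ e₀) - (if ω e₀ then θ' e₀ else 1 - θ' e₀)|
        = |θ e₀ - θ' e₀| := by
      by_cases hb : ω e₀ = true
      · simp [hb]
      · simp only [Bool.not_eq_true] at hb
        simp only [hb, Bool.false_eq_true, if_false]
        rw [show (1:ℝ) - θ e₀ - (1 - θ' e₀) = -(θ e₀ - θ' e₀) from by ring, abs_neg]
    rw [habs, ← Finset.mul_prod_erase Finset.univ _ (Finset.mem_univ e₀)]
    simp only [if_pos rfl]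
    congr 1
    apply Finset.prod_congr rfl
    intro e he
    rw [if_neg (Finset.ne_of_mem_erase he)]
  -- total weight-difference bound
  have hsumw : ∑ ω : E → Bool, |liveWeight θ ω - liveWeight θ' ω| = 2 * |θ e₀ - θ' e₀| := by
    have hsg := sumProdG (fun (e : E) (b : Bool) =>
      if e = e₀ then |θ e₀ - θ' e₀| else (if b then θ e else 1 - θ e))
    rw [Finset.sum_congr rfl (fun ω _ => hpt ω), hsg]
    rw [← Finset.mul_prod_erase Finset.univ _ (Finset.mem_univ e₀)]
    have : ∀ e ∈ Finset.univ.erase e₀,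
        ((fun e b => if e = e₀ then |θ e₀ - θ' e₀| else (if b then θ e else 1 - θ e)) e true +
         (fun e b => if e = e₀ then |θ e₀ - θ' e₀| else (if b then θ e else 1 - θ e)) e false) = 1 := by
      intro e he
      simp only [if_neg (Finset.ne_of_mem_erase he)]
      norm_num
    rw [Finset.prod_congr rfl this]
    simp only [if_pos rfl, if_true, Finset.prod_const_one]
    ring
  -- centered rewriting of the difference
  have hcenter : icSigma src dst θ S - icSigma src dst θ' S =
      ∑ ω : E → Bool, (liveWeight θ ω - liveWeight θ' ω) * (F ω - n / 2) := by
    have : ∑ ω : E → Bool, (liveWeight θ ω - liveWeight θ' ω) * (F ω - n / 2)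
        = (∑ ω : E → Bool, liveWeight θ ω * F ω) - (∑ ω : E → Bool, liveWeight θ' ω * F ω)
          - (n / 2) * ((∑ ω : E → Bool, liveWeight θ ω) - ∑ ω : E → Bool, liveWeight θ' ω) := by
      rw [← Finset.sum_sub_distrib, ← Finset.sum_sub_distrib, Finset.mul_sum,
        ← Finset.sum_sub_distrib]
      apply Finset.sum_congr rfl
      intro ω _
      ring
    rw [this, sum_liveWeight, sum_liveWeight]
    simp [icSigma, F]
  rw [hcenter]
  calc |∑ ω : E → Bool, (liveWeight θ ω - liveWeight θ' ω) * (F ω - n / 2)|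
      ≤ ∑ ω : E → Bool, |(liveWeight θ ω - liveWeight θ' ω) * (F ω - n / 2)| :=
        Finset.abs_sum_le_sum_abs _ _
    _ ≤ ∑ ω : E → Bool, |liveWeight θ ω - liveWeight θ' ω| * (n / 2) := by
        apply Finset.sum_le_sum
        intro ω _
        rw [abs_mul]
        exact mul_le_mul_of_nonneg_left (hFbd ω) (abs_nonneg _)
    _ = (2 * |θ e₀ - θ' e₀|) * (n / 2) := by rw [← Finset.sum_mul, hsumw]
    _ = |θ e₀ - θ' e₀| * n := by ring

/-- If ‖θ₁ − θ₂‖∞ ≤ ε₀ then |σ_{θ₁}(S) − σ_{θ₂}(S)| ≤ m·n·ε₀ for every seed set S. -/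
theorem ic_influence_lipschitz [Fintype V] [Fintype E] (src dst : E → V)
    (θ₁ θ₂ : E → ℝ) (h₁ : ∀ e, θ₁ e ∈ Set.Icc (0:ℝ) 1) (h₂ : ∀ e, θ₂ e ∈ Set.Icc (0:ℝ) 1)
    (ε₀ : ℝ) (hθ : ∀ e, |θ₁ e - θ₂ e| ≤ ε₀) (S : Finset V) :
    |icSigma src dst θ₁ S - icSigma src dst θ₂ S| ≤
      (Fintype.card E : ℝ) * (Fintype.card V : ℝ) * ε₀ := by
  set hyb : Finset E → (E → ℝ) := fun A e => if e ∈ A then θ₂ e else θ₁ e with hhyb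
  have hhybIcc : ∀ A, ∀ e, hyb A e ∈ Set.Icc (0:ℝ) 1 := by
    intro A e
    simp only [hhyb]
    split
    · exact h₂ e
    · exact h₁ e
  have key : ∀ A : Finset E, |icSigma src dst θ₁ S - icSigma src dst (hyb A) S| ≤
      (A.card : ℝ) * (Fintype.card V : ℝ) * ε₀ := by
    intro A
    induction A using Finset.induction_on with
    | empty =>
      have : hyb ∅ = θ₁ := by funext e; simp [hhyb]
      simp [this]
    | insert a A ha ih' =>
      have hstep : |icSigma src dst (hyb A) S - icSigma src dst (hyb (insert a A)) S| ≤
          |hyb A a - hyb (insert a A) a| * (Fintype.card V : ℝ) := by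
        apply ic_single_edge src dst _ _ (hhybIcc A) (hhybIcc (insert a A)) a _ S
        intro e he
        simp only [hhyb, Finset.mem_insert]
        by_cases heA : e ∈ A <;> simp [heA, he]
      have hval : |hyb A a - hyb (insert a A) a| = |θ₁ a - θ₂ a| := by
        simp [hhyb, ha]
      have hε0 : 0 ≤ ε₀ := le_trans (abs_nonneg _) (hθ a)
      have htri : |icSigma src dst θ₁ S - icSigma src dst (hyb (insert a A)) S| ≤
          |icSigma src dst θ₁ S - icSigma src dst (hyb A) S| +
          |icSigma src dst (hyb A) S - icSigma src dst (hyb (insert a A)) S| :=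
        abs_sub_le _ _ _
      have hV0 : (0:ℝ) ≤ (Fintype.card V : ℝ) := by positivity
      have hstep' : |icSigma src dst (hyb A) S - icSigma src dst (hyb (insert a A)) S| ≤
          (Fintype.card V : ℝ) * ε₀ := by
        calc _ ≤ |θ₁ a - θ₂ a| * (Fintype.card V : ℝ) := by rw [← hval]; exact hstep
          _ ≤ ε₀ * (Fintype.card V : ℝ) := mul_le_mul_of_nonneg_right (hθ a) hV0
          _ = (Fintype.card V : ℝ) * ε₀ := by ring
      rw [Finset.card_insert_of_notMem ha]
      push_cast
      calc |icSigma src dst θ₁ S - icSigma src dst (hyb (insert a A)) S|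
          ≤ (A.card : ℝ) * (Fintype.card V : ℝ) * ε₀ + (Fintype.card V : ℝ) * ε₀ :=
            le_trans htri (add_le_add ih' hstep')
        _ = ((A.card : ℝ) + 1) * (Fintype.card V : ℝ) * ε₀ := by ring
  have huniv : hyb Finset.univ = θ₂ := by
    funext e; simp [hhyb]
  have := key Finset.univ
  rw [huniv, Finset.card_univ] at this
  exact this
end
end

section
/- For the Independent Cascade model defined by the live-edge representation with edge probabilities θ, the influence function σ_θ : 2^V → ℝ is monotone (S ⊆ S' implies σ_θ(S) ≤ σ_θ(S')) and submodular (σ_θ(S ∪ {v}) − σ_θ(S) ≥ σ_θ(S' ∪ {v}) − σ_θ(S') whenever S ⊆ S' and v ∉ S'). -/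
open Finset

noncomputable section
open scoped Classical

variable {V E : Type*}

lemma liveWeight_nonneg [Fintype E] (θ : E → ℝ) (hθ : ∀ e, θ e ∈ Set.Icc (0:ℝ) 1)
    (ω : E → Bool) : 0 ≤ liveWeight θ ω := by
  apply Finset.prod_nonneg
  intro e _
  rcases hθ e with ⟨h0, h1⟩
  split <;> linarith

lemma reaches_mono (src dst : E → V) (ω : E → Bool) {S S' : Finset V} (h : S ⊆ S') {v : V} :
    reaches src dst ω S v → reaches src dst ω S' v := by
  rintro ⟨s, hs, hr⟩; exact ⟨s, h hs, hr⟩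

lemma reaches_insert [DecidableEq V] (src dst : E → V) (ω : E → Bool) (S : Finset V) (v w : V) :
    reaches src dst ω (insert v S) w ↔ reaches src dst ω S w ∨ reaches src dst ω {v} w := by
  constructor
  · rintro ⟨s, hs, hr⟩
    rcases Finset.mem_insert.1 hs with h | h
    · exact Or.inr ⟨s, by simp [h], hr⟩
    · exact Or.inl ⟨s, h, hr⟩
  · rintro (⟨s, hs, hr⟩ | ⟨s, hs, hr⟩)
    · exact ⟨s, Finset.mem_insert_of_mem hs, hr⟩
    · simp only [Finset.mem_singleton] at hs
      exact ⟨s, by simp [hs], hr⟩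

lemma reachSet_insert [Fintype V] [DecidableEq V] (src dst : E → V) (ω : E → Bool)
    (S : Finset V) (v : V) :
    Finset.univ.filter (fun w => reaches src dst ω (insert v S) w) =
      Finset.univ.filter (fun w => reaches src dst ω S w) ∪
        Finset.univ.filter (fun w => reaches src dst ω {v} w) := by
  rw [← Finset.filter_or]
  exact Finset.filter_congr (fun w _ => by
    simp only [reaches_insert src dst ω S v w])

/-- The IC influence function is monotone and submodular in the seed set. -/
theorem ic_monotone_submodular [Fintype V] [Fintype E] [DecidableEq V] (src dst : E → V)
    (θ : E → ℝ) (hθ : ∀ e, θ e ∈ Set.Icc (0:ℝ) 1) :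
    (∀ S S' : Finset V, S ⊆ S' → icSigma src dst θ S ≤ icSigma src dst θ S') ∧
    (∀ S S' : Finset V, ∀ v : V, S ⊆ S' → v ∉ S' →
      icSigma src dst θ (insert v S') - icSigma src dst θ S' ≤
        icSigma src dst θ (insert v S) - icSigma src dst θ S) := by
  constructor
  · intro S S' hSS
    apply Finset.sum_le_sum
    intro ω _
    apply mul_le_mul_of_nonneg_left _ (liveWeight_nonneg θ hθ ω)
    exact_mod_cast Finset.card_le_card
      (Finset.monotone_filter_right Finset.univ (fun w _ h => reaches_mono src dst ω hSS h))
  · intro S S' v hSS hv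
    rw [sub_le_sub_iff]
    unfold icSigma
    rw [← Finset.sum_add_distrib, ← Finset.sum_add_distrib]
    apply Finset.sum_le_sum
    intro ω _
    rw [← mul_add, ← mul_add]
    apply mul_le_mul_of_nonneg_left _ (liveWeight_nonneg θ hθ ω)
    set A := Finset.univ.filter (fun w => reaches src dst ω S w) with hA
    set B := Finset.univ.filter (fun w => reaches src dst ω S' w) with hB
    set C := Finset.univ.filter (fun w => reaches src dst ω {v} w) with hC
    have hAB : A ⊆ B :=
      Finset.monotone_filter_right Finset.univ (fun w _ h => reaches_mono src dst ω hSS h)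
    rw [reachSet_insert src dst ω S v, reachSet_insert src dst ω S' v]
    have h1 : (C \ B).card + B.card = (B ∪ C).card := by
      rw [Finset.union_comm]; exact Finset.card_sdiff_add_card C B
    have h2 : (C \ A).card + A.card = (A ∪ C).card := by
      rw [Finset.union_comm]; exact Finset.card_sdiff_add_card C A
    have h3 : (C \ B).card ≤ (C \ A).card :=
      Finset.card_le_card (Finset.sdiff_subset_sdiff le_rfl hAB)
    have h4 : (B ∪ C).card + A.card ≤ (A ∪ C).card + B.card := by omega
    exact_mod_cast h4
end
end
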